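/- For α > 0, h > 0, r₀ ∈ (0, α/√2), the integral of S⁻_t = (2(α² - 4r²)/(α²√(α² - 2r²))) dr∧dz∧dφ over the region {0 ≤ r ≤ r₀} × [0,h] × [0,2π] equals (4πh r₀ √(α² - 2r₀²))/α², and this value is positive. -/

import Mathlib

open Real intervalIntegral

/-- Time component of the gravitational energy-momentum flux through the
marginally trapped tube in the Szekeres interior model:
`2πh ∫₀^{r₀} 2(α² - 4r²)/(α²√(α² - 2r²)) dr = 4πh r₀ √(α² - 2r₀²)/α²`,
and this value is positive. -/
theorem szekeres_trapped_flux_time (α h r₀ : ℝ)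
    (hα : 0 < α) (hh : 0 < h) (hr₀ : 0 < r₀) (hr₀' : r₀ < α / Real.sqrt 2) :
    2 * π * h * ∫ r in (0:ℝ)..r₀,
        2 * (α ^ 2 - 4 * r ^ 2) / (α ^ 2 * Real.sqrt (α ^ 2 - 2 * r ^ 2)) =
      4 * π * h * r₀ * Real.sqrt (α ^ 2 - 2 * r₀ ^ 2) / α ^ 2 ∧
    0 < 4 * π * h * r₀ * Real.sqrt (α ^ 2 - 2 * r₀ ^ 2) / α ^ 2 := by
  have hsq : 0 < α ^ 2 - 2 * r₀ ^ 2 := by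
    have h2 : (0:ℝ) < Real.sqrt 2 := by positivity
    have hlt : r₀ * Real.sqrt 2 < α := (lt_div_iff₀ h2).mp hr₀'
    nlinarith [mul_pos (sub_pos.mpr hlt) (show (0:ℝ) < α + r₀ * Real.sqrt 2 by positivity),
      Real.sq_sqrt (show (0:ℝ) ≤ 2 by norm_num)]
  -- positivity on [0, r₀]
  have hpos : ∀ r ∈ Set.uIcc (0:ℝ) r₀, 0 < α ^ 2 - 2 * r ^ 2 := by
    intro r hr
    rw [Set.uIcc_of_le hr₀.le] at hr
    nlinarith [hr.1, hr.2]
  have hderiv : ∀ r ∈ Set.uIcc (0:ℝ) r₀,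
      HasDerivAt (fun x => x * Real.sqrt (α ^ 2 - 2 * x ^ 2))
        ((α ^ 2 - 4 * r ^ 2) / Real.sqrt (α ^ 2 - 2 * r ^ 2)) r := by
    intro r hr
    have hu := hpos r hr
    have hinner : HasDerivAt (fun x : ℝ => α ^ 2 - 2 * x ^ 2) (-(4 * r)) r := by
      have := ((hasDerivAt_pow 2 r).const_mul (2:ℝ)).const_sub (α ^ 2)
      simpa using this.congr_deriv (by ring)
    have hsqrt := (Real.hasDerivAt_sqrt hu.ne').comp r hinner
    simp only [Function.comp_def] at hsqrt
    have hprod := (hasDerivAt_id r).mul hsqrt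
    have hsne : Real.sqrt (α ^ 2 - 2 * r ^ 2) ≠ 0 := Real.sqrt_pos.mpr hu |>.ne'
    have hsq' : Real.sqrt (α ^ 2 - 2 * r ^ 2) ^ 2 = α ^ 2 - 2 * r ^ 2 :=
      Real.sq_sqrt hu.le
    refine hprod.congr_deriv ?_
    simp only [id]
    field_simp
    linear_combination 2 * hsq'
  have hcont : ContinuousOn
      (fun r => (α ^ 2 - 4 * r ^ 2) / Real.sqrt (α ^ 2 - 2 * r ^ 2))
      (Set.uIcc (0:ℝ) r₀) := by
    apply ContinuousOn.div
    · fun_prop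
    · fun_prop
    · intro r hr
      exact (Real.sqrt_pos.mpr (hpos r hr)).ne'
  have hFTC : ∫ r in (0:ℝ)..r₀,
      (α ^ 2 - 4 * r ^ 2) / Real.sqrt (α ^ 2 - 2 * r ^ 2)
      = r₀ * Real.sqrt (α ^ 2 - 2 * r₀ ^ 2) := by
    have := intervalIntegral.integral_eq_sub_of_hasDerivAt hderiv
      (hcont.intervalIntegrable)
    simpa using this
  have hαne : (α:ℝ) ^ 2 ≠ 0 := by positivity
  constructor
  · have hrw : ∀ r : ℝ,
        2 * (α ^ 2 - 4 * r ^ 2) / (α ^ 2 * Real.sqrt (α ^ 2 - 2 * r ^ 2))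
        = (2 / α ^ 2) * ((α ^ 2 - 4 * r ^ 2) / Real.sqrt (α ^ 2 - 2 * r ^ 2)) := by
      intro r; field_simp
    simp only [hrw]
    rw [intervalIntegral.integral_const_mul, hFTC]
    field_simp
    ring
  · have : 0 < Real.sqrt (α ^ 2 - 2 * r₀ ^ 2) := Real.sqrt_pos.mpr hsq
    positivity
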